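/- Let n be a positive integer and let f be a polynomial with complex coefficients of degree at most n. Then ∑_{k=1}^{n} C(n,k) (-1)^{k-1} f(k)/k = f'(0) + f(0) H_n. -/

import Mathlib

open Finset Nat

private lemma icc_to_range (n : ℕ) (F : ℕ → ℂ) :
    ∑ k ∈ Finset.Icc 1 n, F k = ∑ j ∈ Finset.range n, F (j+1) := by
  rw [← Finset.Ico_add_one_right_eq_Icc, Finset.sum_Ico_eq_sum_range]
  simp [add_comm]

private lemma pascal_step (n : ℕ) (G : ℕ → ℂ) :
    ∑ k ∈ Finset.range (n+2), (-1:ℂ)^k * ((n+1).choose k) * G k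
      = ∑ k ∈ Finset.range (n+1), (-1:ℂ)^k * (n.choose k) * (G k - G (k+1)) := by
  have h1 : ∑ k ∈ Finset.range (n+2), (-1:ℂ)^k * ((n+1).choose k) * G k
      = ∑ k ∈ Finset.range (n+1), (-1:ℂ)^(k+1) * ((n+1).choose (k+1)) * G (k+1) + G 0 := by
    rw [Finset.sum_range_succ' (fun k => (-1:ℂ)^k * ((n+1).choose k) * G k) (n+1)]
    simp
  have h2 : ∑ k ∈ Finset.range (n+1), (-1:ℂ)^k * (n.choose k) * G k
      = ∑ k ∈ Finset.range (n+1), (-1:ℂ)^(k+1) * (n.choose (k+1)) * G (k+1) + G 0 := by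
    rw [Finset.sum_range_succ' (fun k => (-1:ℂ)^k * (n.choose k) * G k) n,
        Finset.sum_range_succ (fun k => (-1:ℂ)^(k+1) * (n.choose (k+1)) * G (k+1)) n]
    simp [Nat.choose_succ_self]
  rw [h1]
  simp only [mul_sub, Finset.sum_sub_distrib]
  rw [h2]
  simp only [Nat.choose_succ_succ, Nat.cast_add, mul_add, add_mul]
  rw [Finset.sum_add_distrib]
  have h3 : ∀ k, (-1:ℂ)^(k+1) * (n.choose k) * G (k+1)
      = -((-1:ℂ)^k * (n.choose k) * G (k+1)) := by
    intro k; rw [pow_succ]; ring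
  simp only [h3, Finset.sum_neg_distrib]
  abel

private lemma fd : ∀ n : ℕ, ∀ g : Polynomial ℂ, g.natDegree < n →
    ∑ k ∈ Finset.range (n+1), (-1:ℂ)^k * (n.choose k) * g.eval (k:ℂ) = 0
  | 0, g, hg => absurd hg (by omega)
  | n+1, g, hg => by
    set h : Polynomial ℂ := g - g.comp (Polynomial.X + Polynomial.C 1) with hh
    have heval : ∀ k : ℕ, h.eval (k:ℂ) = g.eval (k:ℂ) - g.eval ((k:ℂ)+1) := by
      intro k; simp [hh, Polynomial.eval_comp]
    have key : ∑ k ∈ Finset.range (n+2), (-1:ℂ)^k * ((n+1).choose k) * g.eval (k:ℂ)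
        = ∑ k ∈ Finset.range (n+1), (-1:ℂ)^k * (n.choose k) * h.eval (k:ℂ) := by
      rw [pascal_step n (fun k => g.eval (k:ℂ))]
      apply Finset.sum_congr rfl
      intro k _
      rw [heval k]
      push_cast
      ring
    rw [key]
    by_cases hz : h = 0
    · simp [hz]
    · apply fd n h
      have hg0 : g ≠ 0 := by
        intro h0; apply hz; simp [hh, h0]
      have hq : (Polynomial.X + Polynomial.C 1 : Polynomial ℂ).natDegree = 1 :=
        Polynomial.natDegree_X_add_C _
      have hdeg : (g.comp (Polynomial.X + Polynomial.C 1)).natDegree = g.natDegree := by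
        rw [Polynomial.natDegree_comp, hq, mul_one]
      have hc0 : g.comp (Polynomial.X + Polynomial.C 1) ≠ 0 := by
        intro h0
        apply hg0
        have := Polynomial.natDegree_eq_zero.mp (by rw [← hdeg, h0]; simp : g.natDegree = 0)
        obtain ⟨c, rfl⟩ := this
        simp only [Polynomial.C_comp] at h0
        rw [h0]
      have hdeg' : (g.comp (Polynomial.X + Polynomial.C 1)).degree = g.degree := by
        rw [Polynomial.degree_eq_natDegree hc0, Polynomial.degree_eq_natDegree hg0, hdeg]
      have hlc : g.leadingCoeff = (g.comp (Polynomial.X + Polynomial.C 1)).leadingCoeff := by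
        rw [Polynomial.leadingCoeff_comp (by rw [hq]; omega),
          Polynomial.leadingCoeff_X_add_C, one_pow, mul_one]
      have hlt : h.degree < g.degree := Polynomial.degree_sub_lt hdeg'.symm hg0 hlc
      have := Polynomial.natDegree_lt_natDegree hz hlt
      omega

private lemma fd' (n : ℕ) (g : Polynomial ℂ) (hg : g.natDegree < n) :
    ∑ j ∈ Finset.range n, ((n.choose (j+1)) : ℂ) * (-1)^j * g.eval ((j:ℂ)+1) = g.eval 0 := by
  have h := fd n g hg
  rw [Finset.sum_range_succ' (fun k => (-1:ℂ)^k * (n.choose k) * g.eval (k:ℂ)) n] at h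
  have hc : ∀ j : ℕ, ((j+1 : ℕ) : ℂ) = (j:ℂ)+1 := by intro j; push_cast; ring
  simp only [hc, Nat.choose_zero_right, Nat.cast_one, pow_zero, one_mul, Nat.cast_zero, zero_add] at h
  have h3 : ∑ j ∈ Finset.range n, (-1:ℂ)^(j+1) * (n.choose (j+1)) * g.eval ((j:ℂ)+1)
      = - g.eval 0 := eq_neg_of_add_eq_zero_left h
  have h2 : ∑ j ∈ Finset.range n, ((n.choose (j+1)) : ℂ) * (-1)^j * g.eval ((j:ℂ)+1)
      = - ∑ j ∈ Finset.range n, (-1:ℂ)^(j+1) * (n.choose (j+1)) * g.eval ((j:ℂ)+1) := by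
    rw [← Finset.sum_neg_distrib]
    apply Finset.sum_congr rfl
    intro j _
    rw [pow_succ]
    ring
  rw [h2, h3, neg_neg]

private lemma harm : ∀ n : ℕ, 0 < n →
    ∑ j ∈ Finset.range n, ((n.choose (j+1)):ℂ) * (-1)^j / ((j:ℂ)+1)
      = ∑ i ∈ Finset.range n, (1:ℂ)/((i:ℂ)+1)
  | 0, h => absurd h (by omega)
  | 1, _ => by norm_num
  | (n+2), _ => by
    have IH := harm (n+1) (by omega)
    have hone : ∑ j ∈ Finset.range (n+2), (((n+2).choose (j+1)):ℂ) * (-1)^j = 1 := by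
      have h := fd' (n+2) 1 (by simp)
      simpa using h
    have hsplit : ∀ j ∈ Finset.range (n+2), (((n+2).choose (j+1)):ℂ) * (-1)^j / ((j:ℂ)+1)
        = ((n+1).choose (j+1):ℂ) * (-1)^j / ((j:ℂ)+1)
          + (1/((n:ℂ)+2)) * ((((n+2).choose (j+1)):ℂ) * (-1)^j) := by
      intro j _
      have hch : (((n+2).choose (j+1)) : ℂ)
          = ((n+1).choose j:ℂ) + ((n+1).choose (j+1):ℂ) := by
        exact_mod_cast congrArg (Nat.cast : ℕ → ℂ) (Nat.choose_succ_succ (n+1) j)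
      have key : ((n:ℂ)+2) * ((n+1).choose j) = (((n+2).choose (j+1)):ℂ) * ((j:ℂ)+1) := by
        have := Nat.add_one_mul_choose_eq (n+1) j
        have h2 : ((n+2) * ((n+1).choose j) : ℕ) = ((n+2).choose (j+1)) * (j+1) := this
        exact_mod_cast congrArg (Nat.cast : ℕ → ℂ) h2
      have hj : ((j:ℂ)+1) ≠ 0 := by
        exact_mod_cast Nat.cast_add_one_ne_zero (R := ℂ) j
      have hN : ((n:ℂ)+2) ≠ 0 := by
        have h0 : ((n+2:ℕ):ℂ) ≠ 0 := Nat.cast_ne_zero.mpr (by omega)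
        push_cast at h0
        exact h0
      field_simp
      linear_combination ((n:ℂ)+2) * hch + key
    rw [Finset.sum_congr rfl hsplit, Finset.sum_add_distrib, ← Finset.mul_sum, hone,
      Finset.sum_range_succ (fun j => ((n+1).choose (j+1):ℂ) * (-1)^j / ((j:ℂ)+1)) (n+1)]
    simp only [Nat.choose_succ_self, Nat.cast_zero, zero_mul, zero_div, add_zero]
    rw [IH, Finset.sum_range_succ (fun i => (1:ℂ)/((i:ℂ)+1)) (n+1)]
    push_cast
    ring

theorem melzak_harmonic (n : ℕ) (hn : 0 < n) (f : Polynomial ℂ) (hf : f.natDegree ≤ n) :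
    ∑ k ∈ Finset.Icc 1 n, (n.choose k : ℂ) * (-1) ^ (k - 1) * f.eval (k : ℂ) / (k : ℂ) =
      f.derivative.eval 0 + f.eval 0 * ∑ i ∈ Finset.range n, (1 : ℂ) / (i + 1) := by
  set g := f.divX with hgdef
  have hgd : g.natDegree < n := by
    have h1 : g.natDegree = f.natDegree - 1 := by
      rw [hgdef]; exact f.natDegree_divX_eq_natDegree_tsub_one
    omega
  have hfeval : ∀ j : ℕ, f.eval ((j:ℂ)+1) = ((j:ℂ)+1) * g.eval ((j:ℂ)+1) + f.eval 0 := by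
    intro j
    conv_lhs => rw [← f.X_mul_divX_add]
    simp [Polynomial.coeff_zero_eq_eval_zero, ← hgdef]
  have hder : f.derivative.eval 0 = g.eval 0 := by
    rw [← Polynomial.coeff_zero_eq_eval_zero, ← Polynomial.coeff_zero_eq_eval_zero,
      Polynomial.coeff_derivative, hgdef, Polynomial.coeff_divX]
    ring
  rw [icc_to_range n (fun k => (n.choose k : ℂ) * (-1) ^ (k - 1) * f.eval (k : ℂ) / (k : ℂ))]
  have step : ∀ j ∈ Finset.range n,
      ((n.choose (j+1)):ℂ) * (-1)^((j+1)-1) * f.eval (((j+1 : ℕ)):ℂ) / (((j+1:ℕ)):ℂ)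
      = ((n.choose (j+1)):ℂ) * (-1)^j * g.eval ((j:ℂ)+1)
        + f.eval 0 * (((n.choose (j+1)):ℂ) * (-1)^j / ((j:ℂ)+1)) := by
    intro j _
    have hj : ((j:ℂ)+1) ≠ 0 := by
      exact_mod_cast Nat.cast_add_one_ne_zero (R := ℂ) j
    have hsimp : (((j+1:ℕ)):ℂ) = (j:ℂ)+1 := by push_cast; ring
    rw [Nat.add_sub_cancel, hsimp, hfeval j]
    field_simp
  rw [Finset.sum_congr rfl step, Finset.sum_add_distrib, fd' n g hgd, ← Finset.mul_sum,
    harm n hn, hder]
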